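/- Let R be a commutative ring, I an ideal with ara(I) = h witnessed by q₁,...,q_h, let m₀ ∈ R, and in R' = R[x₀] set I' = (m₀) + x₀·I·R'. Then √((m₀, x₀q₁, ..., x₀q_h)) = √(I') in R'. Consequently ara(I') ≤ ara(I) + 1. -/

import Mathlib

set_option synthInstance.maxHeartbeats 1000000
set_option maxHeartbeats 1000000

open MvPolynomial Ideal CategoryTheory

noncomputable section

/-- The arithmetical rank of an ideal: the least `r` such that some `r` elements
generate `I` up to radical. -/
noncomputable def ara {R : Type*} [CommRing R] (I : Ideal R) : ℕ :=
  sInf {r | ∃ a : Fin r → R, Ideal.radical (Ideal.span (Set.range a)) = Ideal.radical I}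

/-- The height of an ideal: the infimum of the heights of the primes containing it. -/
noncomputable def idealHeight {R : Type*} [CommRing R] (I : Ideal R) : ℕ∞ :=
  ⨅ (P : PrimeSpectrum R) (_ : I ≤ P.asIdeal), Order.height P

/-- If `q₁,…,q_h` generate `I` up to radical, then `m₀, x₀q₁, …, x₀q_h` generate
`I' = (m₀) + x₀·I·R[x₀]` up to radical; consequently `ara I' ≤ ara I + 1`. -/
theorem stmt10 {R : Type*} [CommRing R] (I : Ideal R) (h : ℕ) (q : Fin h → R)
    (hq : Ideal.radical (Ideal.span (Set.range q)) = Ideal.radical I)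
    (hara : ara I = h) (m₀ : R)
    (I' : Ideal (Polynomial R))
    (hI' : I' = Ideal.span {Polynomial.C m₀} ⊔
      Ideal.span ((fun r : R => (Polynomial.X : Polynomial R) * Polynomial.C r) '' I)) :
    Ideal.radical (Ideal.span ({Polynomial.C m₀} ∪
        Set.range fun i => (Polynomial.X : Polynomial R) * Polynomial.C (q i))) =
      Ideal.radical I' ∧ ara I' ≤ ara I + 1 := by
  set G : Set (Polynomial R) := {Polynomial.C m₀} ∪
      Set.range fun i => (Polynomial.X : Polynomial R) * Polynomial.C (q i) with hG
  have powkey : ∀ (a : R) (n : ℕ), ((Polynomial.X : Polynomial R) * Polynomial.C a) ^ (n+1)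
      = (Polynomial.X * Polynomial.C (a ^ n)) * (Polynomial.X ^ n * Polynomial.C a) := by
    intro a n
    simp only [mul_pow, map_pow]
    ring
  -- span G ≤ radical I'
  have h1 : Ideal.span G ≤ Ideal.radical I' := by
    rw [Ideal.span_le]
    rintro p (rfl | ⟨i, rfl⟩)
    · exact Ideal.le_radical (hI' ▸ (le_sup_left : Ideal.span {Polynomial.C m₀} ≤ _)
        (Ideal.subset_span rfl))
    · have hqi : q i ∈ Ideal.radical I := by
        rw [← hq]
        exact Ideal.le_radical (Ideal.subset_span ⟨i, rfl⟩)
      obtain ⟨n, hn⟩ := hqi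
      refine ⟨n + 1, ?_⟩
      rw [powkey]
      refine Ideal.mul_mem_right _ _ ?_
      rw [hI']
      exact (le_sup_right : Ideal.span _ ≤ _) (Ideal.subset_span (s := (fun r : R => (Polynomial.X : Polynomial R) * Polynomial.C r) '' I) ⟨q i ^ n, hn, rfl⟩)
  -- I' ≤ radical (span G)
  have h2 : I' ≤ Ideal.radical (Ideal.span G) := by
    rw [hI', sup_le_iff]
    constructor
    · rw [Ideal.span_le]
      rintro p rfl
      exact Ideal.le_radical (Ideal.subset_span (Or.inl rfl))
    · rw [Ideal.span_le]
      rintro p ⟨r, hr, rfl⟩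
      have hrrad : r ∈ Ideal.radical (Ideal.span (Set.range q)) := hq ▸ Ideal.le_radical hr
      obtain ⟨n, hn⟩ := hrrad
      refine ⟨n + 1, ?_⟩
      rw [powkey]
      refine Ideal.mul_mem_right _ _ ?_
      -- X * C (r ^ n) ∈ span G
      have hmap : Polynomial.C (r ^ n) ∈
          Ideal.map (Polynomial.C : R →+* Polynomial R) (Ideal.span (Set.range q)) :=
        Ideal.mem_map_of_mem _ hn
      rw [Ideal.map_span] at hmap
      have : ∀ p ∈ Ideal.span ((Polynomial.C : R →+* Polynomial R) '' Set.range q),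
          Polynomial.X * p ∈ Ideal.span G := by
        intro p hp
        refine Submodule.span_induction ?_ ?_ ?_ ?_ hp
        · rintro _ ⟨_, ⟨i, rfl⟩, rfl⟩
          exact Ideal.subset_span (Or.inr ⟨i, rfl⟩)
        · simp
        · intro a b _ _ ha hb
          rw [mul_add]; exact Ideal.add_mem _ ha hb
        · intro a b _ hb
          have : Polynomial.X * (a • b) = a • (Polynomial.X * b) := by
            simp [smul_eq_mul]; ring
          rw [this]
          exact Ideal.mul_mem_left _ _ hb
      exact this _ hmap
  have key : Ideal.radical (Ideal.span G) = Ideal.radical I' := by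
    apply le_antisymm
    · calc Ideal.radical (Ideal.span G) ≤ Ideal.radical (Ideal.radical I') :=
            Ideal.radical_mono h1
        _ = Ideal.radical I' := Ideal.radical_idem _
    · calc Ideal.radical I' ≤ Ideal.radical (Ideal.radical (Ideal.span G)) :=
            Ideal.radical_mono h2
        _ = Ideal.radical (Ideal.span G) := Ideal.radical_idem _
  refine ⟨key, ?_⟩
  rw [hara]
  apply Nat.sInf_le
  refine ⟨Fin.cons (Polynomial.C m₀) (fun i => Polynomial.X * Polynomial.C (q i)), ?_⟩
  rw [Fin.range_cons, Set.insert_eq]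
  exact key
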